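/- Let r and k be positive integers and let H be a finite simple graph with at least two vertices. Suppose there exists a vertex c of H with N_r[c] = V(H), and suppose that for every vertex v of H there exists a nonempty induced subgraph H_v of H − v with rk_r(H_v) ≥ k. Then rk_r(H) ≥ k + 1. -/
import Mathlib


open Classical

/-- The closed `r`-neighborhood of `c` inside the induced subgraph `G[A]`:
all vertices of `A` joined to `c` by a walk of length at most `r` staying in `A`. -/
noncomputable def ball {V : Type*} (G : SimpleGraph V) (r : ℕ) (A : Finset V) (c : V) :
    Finset V :=
  A.filter (fun v => ∃ p : G.Walk c v, p.length ≤ r ∧ ∀ x ∈ p.support, x ∈ A)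

/-- The `r`-splitter rank of the induced subgraph `G[A]` (with `rank ∅ = 0`). -/
noncomputable def splitterRank {V : Type*} [DecidableEq V] (G : SimpleGraph V) (r : ℕ)
    (A : Finset V) : ℕ :=
  if _ : A.Nonempty then
    1 + A.attach.sup (fun c =>
      (ball G r A c.1).attach.inf'
        (Finset.attach_nonempty_iff.2 ⟨c.1, Finset.mem_filter.2 ⟨c.2,
          SimpleGraph.Walk.nil, by simp, by simp [c.2]⟩⟩)
        (fun s => splitterRank G r ((ball G r A c.1).erase s.1)))
  else 0
termination_by A.card
decreasing_by
  exact lt_of_lt_of_le (Finset.card_erase_lt_of_mem s.2)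
    (Finset.card_le_card (Finset.filter_subset _ _))

lemma mem_ball_self {V : Type*} (G : SimpleGraph V) (r : ℕ) {A : Finset V} {c : V}
    (hc : c ∈ A) : c ∈ ball G r A c :=
  Finset.mem_filter.2 ⟨hc, SimpleGraph.Walk.nil, by simp, by simp [hc]⟩

lemma ball_subset {V : Type*} (G : SimpleGraph V) (r : ℕ) (A : Finset V) (c : V) :
    ball G r A c ⊆ A := Finset.filter_subset _ _

lemma ball_mono {V : Type*} (G : SimpleGraph V) (r : ℕ) {A B : Finset V} (h : A ⊆ B) (c : V) :
    ball G r A c ⊆ ball G r B c := by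
  intro v hv
  rw [ball, Finset.mem_filter] at hv ⊢
  obtain ⟨hvA, p, hp, hsup⟩ := hv
  exact ⟨h hvA, p, hp, fun x hx => h (hsup x hx)⟩

lemma splitterRank_mono {V : Type*} [DecidableEq V] (G : SimpleGraph V) (r : ℕ) :
    ∀ n (B A : Finset V), B.card ≤ n → A ⊆ B → splitterRank G r A ≤ splitterRank G r B := by
  intro n
  induction n with
  | zero =>
    intro B A hB hAB
    have hA : ¬ A.Nonempty := by
      rintro ⟨a, ha⟩
      have := Finset.card_pos.2 ⟨a, hAB ha⟩
      omega
    rw [splitterRank, dif_neg hA]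
    exact Nat.zero_le _
  | succ n ih =>
    intro B A hB hAB
    by_cases hA : A.Nonempty
    · have hBne : B.Nonempty := hA.mono hAB
      rw [splitterRank, dif_pos hA, splitterRank, dif_pos hBne]
      refine Nat.add_le_add_left ?_ 1
      apply Finset.sup_le
      intro c _
      refine le_trans ?_ (Finset.le_sup (Finset.mem_attach _ ⟨c.1, hAB c.2⟩))
      apply Finset.le_inf'
      intro s _
      have hcard : ∀ x ∈ ball G r B c.1, ((ball G r B c.1).erase x).card ≤ n := by
        intro x hx
        have h1 : (ball G r B c.1).card ≤ B.card :=
          Finset.card_le_card (ball_subset G r B c.1)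
        have h2 := Finset.card_erase_lt_of_mem hx
        omega
      by_cases hsA : s.1 ∈ ball G r A c.1
      · refine le_trans (Finset.inf'_le _ (Finset.mem_attach _ ⟨s.1, hsA⟩)) ?_
        exact ih _ _ (hcard _ s.2) (Finset.erase_subset_erase _ (ball_mono G r hAB c.1))
      · refine le_trans
          (Finset.inf'_le _ (Finset.mem_attach _ ⟨c.1, mem_ball_self G r c.2⟩)) ?_
        refine ih _ _ (hcard _ s.2) ?_
        intro x hx
        have hx' : x ∈ ball G r A c.1 := Finset.erase_subset _ _ hx
        refine Finset.mem_erase.2 ⟨?_, ball_mono G r hAB c.1 hx'⟩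
        rintro rfl; exact hsA hx'
    · rw [splitterRank, dif_neg hA]
      exact Nat.zero_le _

/-- If `H` has a central vertex and for every vertex `v` the graph `H - v` contains a nonempty
induced subgraph of `r`-splitter rank at least `k`, then `rk_r(H) ≥ k + 1`. -/
theorem rank_lower_bound {V : Type*} [Fintype V] [DecidableEq V]
    (G : SimpleGraph V) (r k : ℕ) (hr : 0 < r) (hk : 0 < k) (h2 : 2 ≤ Fintype.card V)
    (hc : ∃ c : V, ball G r Finset.univ c = Finset.univ)
    (hsub : ∀ v : V, ∃ Hv : Finset V, Hv.Nonempty ∧ Hv ⊆ Finset.univ.erase v ∧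
      k ≤ splitterRank G r Hv) :
    k + 1 ≤ splitterRank G r Finset.univ := by
  obtain ⟨c, hc⟩ := hc
  have : Nonempty V := Fintype.card_pos_iff.mp (by omega)
  rw [splitterRank, dif_pos Finset.univ_nonempty]
  have hkey : k ≤ (ball G r Finset.univ c).attach.inf'
      (Finset.attach_nonempty_iff.2 ⟨c, Finset.mem_filter.2 ⟨Finset.mem_univ c,
        SimpleGraph.Walk.nil, by simp, by simp⟩⟩)
      (fun s => splitterRank G r ((ball G r Finset.univ c).erase s.1)) := by
    apply Finset.le_inf'
    intro s _
    obtain ⟨Hv, _, hHsub, hHk⟩ := hsub s.1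
    refine le_trans hHk (splitterRank_mono G r ((ball G r Finset.univ c).erase s.1).card
      _ _ le_rfl ?_)
    intro x hx
    have h' := Finset.mem_erase.1 (hHsub hx)
    exact Finset.mem_erase.2 ⟨h'.1, hc.symm ▸ Finset.mem_univ x⟩
  refine le_trans ?_
    (Nat.add_le_add_left (Finset.le_sup (Finset.mem_attach _ ⟨c, Finset.mem_univ c⟩)) 1)
  exact le_trans (by omega) (Nat.add_le_add_left hkey 1)
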